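/- Let l ≥ 1 be an integer, let s ≥ l+1 be a natural number, let δ ∈ k with δ = 0 in case s ≤ 2l, and set H̃ = X^{l+1} + δ·X^{2l+1}. (a) Suppose Φ ∈ k⟦X⟧ has constant coefficient 0 and coefficient of X equal to 1 and satisfies H̃∘Φ ≡ Φ′·H̃ mod X^{s+1}, and suppose there is an integer m with 2 ≤ m ≤ s such that the coefficient of X^m in Φ is nonzero while the coefficient of X^j in Φ is zero for all 2 ≤ j < m. Then m = l+1 or m ≥ s−l+1. (b) For all c_{s−l+1}, …, c_s ∈ k, the power series Ψ = X + Σ_{i=s−l+1}^{s} c_i X^i satisfies H̃∘Ψ ≡ Ψ′·H̃ mod X^{s+1}. -/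

import Mathlib

open PowerSeries

variable {k : Type*} [Field k] [CharZero k]

/-- Substitution of `g` (with zero constant coefficient) into `f`. -/
noncomputable def comp (f g : PowerSeries k) : PowerSeries k :=
  PowerSeries.mk fun m => ∑ n ∈ Finset.range (m + 1),
    PowerSeries.coeff n f * PowerSeries.coeff m (g ^ n)

/-- The normal form generator. -/
noncomputable def Htilde (l : ℕ) (δ : k) : PowerSeries k :=
  X ^ (l + 1) + C δ * X ^ (2 * l + 1)

section Aux

variable {k : Type*} [Field k]

lemma coeff_pow_zero_of_lt {g : PowerSeries k} (hg : constantCoeff g = 0)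
    {n d : ℕ} (h : d < n) : coeff d (g ^ n) = 0 := by
  have hX : (X : PowerSeries k) ∣ g := X_dvd_iff.mpr hg
  have : (X : PowerSeries k) ^ n ∣ g ^ n := pow_dvd_pow_of_dvd hX n
  exact X_pow_dvd_iff.mp this d h

lemma comp_Htilde (l : ℕ) (hl : 1 ≤ l) (δ : k) (g : PowerSeries k) (hg : constantCoeff g = 0) :
    comp (Htilde l δ) g = g ^ (l + 1) + C δ * g ^ (2 * l + 1) := by
  ext d
  rw [comp, coeff_mk, map_add, coeff_C_mul]
  have key : ∀ n ∈ Finset.range (d + 1),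
      coeff n (Htilde l δ) * coeff d (g ^ n)
      = (if n = l + 1 then coeff d (g ^ (l + 1)) else 0)
        + (if n = 2 * l + 1 then δ * coeff d (g ^ (2 * l + 1)) else 0) := by
    intro n _
    rw [Htilde, map_add, coeff_C_mul, coeff_X_pow, coeff_X_pow]
    by_cases h1 : n = l + 1
    · by_cases h2 : n = 2 * l + 1
      · exfalso; omega
      · subst h1; simp [h2, show l ≠ 2 * l by omega]
    · by_cases h2 : n = 2 * l + 1
      · subst h2; simp [h1, show 2 * l ≠ l by omega]
      · simp [h1, h2]
  rw [Finset.sum_congr rfl key, Finset.sum_add_distrib,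
    Finset.sum_ite_eq' (Finset.range (d + 1)) (l + 1),
    Finset.sum_ite_eq' (Finset.range (d + 1)) (2 * l + 1)]
  have e1 : (if l + 1 ∈ Finset.range (d + 1) then coeff d (g ^ (l + 1)) else 0)
      = coeff d (g ^ (l + 1)) := by
    split_ifs with h
    · rfl
    · rw [coeff_pow_zero_of_lt hg (by simp at h; omega)]
  have e2 : (if 2 * l + 1 ∈ Finset.range (d + 1)
      then δ * coeff d (g ^ (2 * l + 1)) else 0) = δ * coeff d (g ^ (2 * l + 1)) := by
    split_ifs with h
    · rfl
    · rw [coeff_pow_zero_of_lt hg (by simp at h; omega), mul_zero]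
  rw [e1, e2]

/-- Key coefficient computation: if `X^m ∣ Φ - X` then in low degrees the
coefficients of `Φ ^ n` are given by the linear approximation. -/
lemma coeff_pow_aux (Φ : PowerSeries k) (m n d : ℕ) (hm : 2 ≤ m)
    (hW : (X : PowerSeries k) ^ m ∣ Φ - X) (hd : d + 2 < n + 2 * m) (hdn : n ≤ d + 1) :
    coeff d (Φ ^ n)
      = (if d = n then 1 else 0) + (n : k) * coeff (d + 1 - n) (Φ - X) := by
  set W : PowerSeries k := Φ - X with hWdef
  have hΦ : Φ = X + W := by rw [hWdef]; ring
  cases n with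
  | zero =>
    simp only [pow_zero, coeff_one, Nat.cast_zero, zero_mul, add_zero]
  | succ n' =>
    rw [hΦ, add_pow, map_sum, Finset.sum_range_succ, Finset.sum_range_succ]
    have h0 : ∀ j ∈ Finset.range n',
        coeff d ((X : PowerSeries k) ^ j * W ^ (n' + 1 - j) * (((n' + 1).choose j : ℕ) : PowerSeries k)) = 0 := by
      intro j hj
      rw [Finset.mem_range] at hj
      obtain ⟨u, hu⟩ : ∃ u, m = u + 2 := ⟨m - 2, by omega⟩
      have ht : 2 ≤ n' + 1 - j := by omega
      have hdvd : (X : PowerSeries k) ^ (j + m * (n' + 1 - j)) ∣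
          (X : PowerSeries k) ^ j * W ^ (n' + 1 - j) * ↑((n' + 1).choose j) := by
        apply Dvd.dvd.mul_right
        rw [pow_add, pow_mul]
        exact mul_dvd_mul (dvd_refl _) (pow_dvd_pow_of_dvd hW _)
      apply X_pow_dvd_iff.mp hdvd
      have hmul : (u + 1) * 2 ≤ (u + 1) * (n' + 1 - j) := Nat.mul_le_mul_left _ ht
      have : m * (n' + 1 - j) = (n' + 1 - j) + (u + 1) * (n' + 1 - j) := by
        rw [hu]; ring
      omega
    rw [Finset.sum_eq_zero h0, zero_add]
    have hterm1 : coeff d ((X : PowerSeries k) ^ n' * W ^ (n' + 1 - n') * (((n' + 1).choose n' : ℕ) : PowerSeries k))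
        = (n' + 1 : k) * coeff (d - n') W := by
      have h1 : n' + 1 - n' = 1 := by omega
      rw [h1, pow_one, Nat.choose_succ_self_right]
      have hc : ((n' + 1 : ℕ) : PowerSeries k) = C ((n' + 1 : ℕ) : k) := by
        rw [map_natCast]
      rw [hc, coeff_mul_C, coeff_X_pow_mul' W n' d, if_pos (by omega)]
      push_cast
      ring
    have hterm2 : coeff d ((X : PowerSeries k) ^ (n' + 1) * W ^ (n' + 1 - (n' + 1)) *
        (((n' + 1).choose (n' + 1) : ℕ) : PowerSeries k)) = (if d = n' + 1 then 1 else 0) := by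
      simp [coeff_X_pow]
    rw [hterm1, hterm2]
    have : d + 1 - (n' + 1) = d - n' := by omega
    rw [this]
    push_cast
    ring

lemma coeff_derivativeFun' (f : PowerSeries k) (n : ℕ) :
    coeff n (derivativeFun f) = coeff (n + 1) f * (n + 1) :=
  coeff_derivative f n

lemma X_pow_dvd_derivativeFun {r : ℕ} {f : PowerSeries k}
    (h : (X : PowerSeries k) ^ (r + 1) ∣ f) :
    (X : PowerSeries k) ^ r ∣ derivativeFun f := by
  rw [X_pow_dvd_iff] at h ⊢
  intro d hd
  rw [coeff_derivativeFun', h (d + 1) (by omega), zero_mul]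

lemma X_pow_dvd_pow_sub_pow (a b : PowerSeries k) (r n : ℕ)
    (ha : (X : PowerSeries k) ∣ a) (hb : (X : PowerSeries k) ∣ b)
    (hab : (X : PowerSeries k) ^ r ∣ a - b) :
    (X : PowerSeries k) ^ ((n - 1) + r) ∣ a ^ n - b ^ n := by
  rw [← geom_sum₂_mul, pow_add]
  apply mul_dvd_mul _ hab
  apply Finset.dvd_sum
  intro i hi
  rw [Finset.mem_range] at hi
  have h1 : (X : PowerSeries k) ^ (n - 1) = X ^ i * X ^ (n - 1 - i) := by
    rw [← pow_add]
    congr 1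
    omega
  rw [h1]
  exact mul_dvd_mul (pow_dvd_pow_of_dvd ha i) (pow_dvd_pow_of_dvd hb _)

lemma derivativeFun_X' : derivativeFun (X : PowerSeries k) = 1 := by
  ext n
  rw [coeff_derivativeFun', coeff_one, coeff_X]
  cases n with
  | zero => simp
  | succ n => simp

end Aux

/-- (a) If `Φ = X + c_m X^m + …` (`c_m ≠ 0`, `2 ≤ m ≤ s`) solves the truncated
Aczél–Jabotinsky equation with generator `H̃ = X^(l+1) + δX^(2l+1)` mod
`X^(s+1)`, then `m = l+1` or `m ≥ s-l+1`.
(b) `Ψ = X + Σ_{i=s-l+1}^s c_i X^i` always solves it. -/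
theorem aczel_jabotinsky_truncated_first_nonzero_coeff (l s : ℕ)
    (hl : 1 ≤ l) (hs : l + 1 ≤ s) (δ : k) (hδ : s ≤ 2 * l → δ = 0) :
    (∀ Φ : PowerSeries k,
      constantCoeff Φ = 0 → coeff 1 Φ = 1 →
      (X : PowerSeries k) ^ (s + 1) ∣
        comp (Htilde l δ) Φ - derivativeFun Φ * Htilde l δ →
      ∀ m : ℕ, 2 ≤ m → m ≤ s → coeff m Φ ≠ 0 →
        (∀ j, 2 ≤ j → j < m → coeff j Φ = 0) →
        m = l + 1 ∨ s - l + 1 ≤ m) ∧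
    (∀ c : ℕ → k,
      (X : PowerSeries k) ^ (s + 1) ∣
        comp (Htilde l δ) (X + ∑ i ∈ Finset.Icc (s - l + 1) s, C (c i) * X ^ i)
          - derivativeFun (X + ∑ i ∈ Finset.Icc (s - l + 1) s, C (c i) * X ^ i)
              * Htilde l δ) := by
  constructor
  · -- part (a)
    intro Φ h0 h1 hdvd m hm2 hms hcm hcj
    by_contra hcon
    push_neg at hcon
    obtain ⟨hml, hmsl⟩ := hcon
    have hmls : m + l ≤ s := by omega
    rw [comp_Htilde l hl δ Φ h0] at hdvd
    have hW : (X : PowerSeries k) ^ m ∣ Φ - X := by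
      rw [X_pow_dvd_iff]
      intro j hj
      rw [map_sub, coeff_X]
      rcases Nat.lt_or_ge j 2 with h | h
      · interval_cases j
        · rw [coeff_zero_eq_constantCoeff, h0]; simp
        · rw [h1]; simp
      · rw [hcj j h hj, if_neg (by omega), sub_zero]
    have key := X_pow_dvd_iff.mp hdvd (m + l) (by omega)
    rw [map_sub, map_add, coeff_C_mul] at key
    have e1 : coeff (m + l) (Φ ^ (l + 1)) = ((l : k) + 1) * coeff m Φ := by
      rw [coeff_pow_aux Φ m (l + 1) (m + l) hm2 hW (by omega) (by omega),
        if_neg (by omega)]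
      have h2 : m + l + 1 - (l + 1) = m := by omega
      rw [h2, map_sub, coeff_X, if_neg (by omega), sub_zero, zero_add]
      push_cast
      ring
    have e2 : coeff (m + l) (Φ ^ (2 * l + 1)) = 0 := by
      rcases Nat.lt_or_ge (m + l) (2 * l + 1) with h | h
      · exact coeff_pow_zero_of_lt h0 h
      · rw [coeff_pow_aux Φ m (2 * l + 1) (m + l) hm2 hW (by omega) (by omega),
          if_neg (by omega)]
        have h2 : m + l + 1 - (2 * l + 1) = m - l := by omega
        rw [h2, map_sub, hcj (m - l) (by omega) (by omega), coeff_X,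
          if_neg (by omega), sub_zero, mul_zero, add_zero]
    have e3 : coeff (m + l) (derivativeFun Φ * Htilde l δ)
        = (m : k) * coeff m Φ := by
      rw [Htilde, mul_add, map_add, coeff_mul_X_pow' (derivativeFun Φ) (l + 1) (m + l),
        if_pos (by omega)]
      have h2 : m + l - (l + 1) = m - 1 := by omega
      have h3 : m - 1 + 1 = m := by omega
      rw [h2, coeff_derivativeFun', h3]
      have e4 : coeff (m + l) (derivativeFun Φ * (C δ * X ^ (2 * l + 1))) = 0 := by
        rw [mul_left_comm, coeff_C_mul,
          coeff_mul_X_pow' (derivativeFun Φ) (2 * l + 1) (m + l)]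
        rcases Nat.lt_or_ge (m + l) (2 * l + 1) with h | h
        · rw [if_neg (by omega), mul_zero]
        · rw [if_pos (by omega), coeff_derivativeFun']
          have h4 : m + l - (2 * l + 1) + 1 = m - l := by omega
          rw [h4, hcj (m - l) (by omega) (by omega), zero_mul, mul_zero]
      rw [e4, add_zero]
      push_cast [Nat.cast_sub (by omega : 1 ≤ m)]
      ring
    rw [e1, e2, e3, mul_zero, add_zero] at key
    have hfac : (((l : k) + 1) - (m : k)) * coeff m Φ = 0 := by
      linear_combination key
    rcases mul_eq_zero.mp hfac with h | h
    · have hm' : ((m : ℕ) : k) = ((l + 1 : ℕ) : k) := by push_cast; linear_combination -h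
      exact hml (Nat.cast_injective hm')
    · exact hcm h
  · -- part (b)
    intro c
    set E : PowerSeries k := ∑ i ∈ Finset.Icc (s - l + 1) s, C (c i) * X ^ i with hEdef
    have hE : (X : PowerSeries k) ^ (s - l + 1) ∣ E := by
      apply Finset.dvd_sum
      intro i hi
      rw [Finset.mem_Icc] at hi
      exact Dvd.dvd.mul_left (pow_dvd_pow X hi.1) _
    have hXE : (X : PowerSeries k) ∣ E :=
      dvd_trans (dvd_pow_self X (by omega)) hE
    have hE0 : constantCoeff E = 0 := X_dvd_iff.mp hXE
    have hΨ0 : constantCoeff (X + E) = 0 := by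
      rw [map_add, constantCoeff_X, hE0, add_zero]
    rw [comp_Htilde l hl δ _ hΨ0, derivativeFun_add, derivativeFun_X']
    have hA : (X : PowerSeries k) ^ (s + 1) ∣ (X + E) ^ (l + 1) - X ^ (l + 1) := by
      refine dvd_trans (pow_dvd_pow X (by omega : s + 1 ≤ (l + 1 - 1) + (s - l + 1))) ?_
      exact X_pow_dvd_pow_sub_pow (X + E) X (s - l + 1) (l + 1)
        (dvd_add (dvd_refl X) hXE) (dvd_refl X) (by simpa using hE)
    have hB : (X : PowerSeries k) ^ (s + 1) ∣
        C δ * ((X + E) ^ (2 * l + 1) - X ^ (2 * l + 1)) := by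
      apply Dvd.dvd.mul_left
      refine dvd_trans (pow_dvd_pow X (by omega : s + 1 ≤ (2 * l + 1 - 1) + (s - l + 1))) ?_
      exact X_pow_dvd_pow_sub_pow (X + E) X (s - l + 1) (2 * l + 1)
        (dvd_add (dvd_refl X) hXE) (dvd_refl X) (by simpa using hE)
    have hE' : (X : PowerSeries k) ^ (s - l) ∣ derivativeFun E :=
      X_pow_dvd_derivativeFun hE
    have hC : (X : PowerSeries k) ^ (s + 1) ∣ derivativeFun E * X ^ (l + 1) := by
      refine dvd_trans (pow_dvd_pow X (by omega : s + 1 ≤ (s - l) + (l + 1))) ?_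
      rw [pow_add]
      exact mul_dvd_mul hE' (dvd_refl _)
    have hD : (X : PowerSeries k) ^ (s + 1) ∣
        derivativeFun E * (C δ * X ^ (2 * l + 1)) := by
      refine dvd_trans (pow_dvd_pow X (by omega : s + 1 ≤ (s - l) + (2 * l + 1))) ?_
      rw [pow_add, mul_left_comm]
      exact Dvd.dvd.mul_left (mul_dvd_mul hE' (dvd_refl _)) _
    have hsplit : (X + E) ^ (l + 1) + C δ * (X + E) ^ (2 * l + 1)
        - (1 + derivativeFun E) * Htilde l δ
        = ((X + E) ^ (l + 1) - X ^ (l + 1))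
          + C δ * ((X + E) ^ (2 * l + 1) - X ^ (2 * l + 1))
          - derivativeFun E * X ^ (l + 1)
          - derivativeFun E * (C δ * X ^ (2 * l + 1)) := by
      rw [Htilde]; ring
    rw [hsplit]
    exact dvd_sub (dvd_sub (dvd_add hA hB) hC) hD
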